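/- For all parameters d₁ > 0 and p₁ > 0, the function d ↦ d₁/d + exp(−d/p₁)(1 − d₁/d) is strictly decreasing on the interval [d₁, ∞); that is, the LoS probability strictly decreases as the horizontal distance between transmitter and receiver grows beyond d₁. -/

import Mathlib

open Real Set

/-- For all parameters d₁ > 0 and p₁ > 0, the LoS probability
d ↦ d₁/d + exp(−d/p₁)(1 − d₁/d) is strictly decreasing on [d₁, ∞). -/
theorem los_probability_strictAntiOn (d₁ p₁ : ℝ) (hd₁ : 0 < d₁) (hp₁ : 0 < p₁) :
    StrictAntiOn (fun d : ℝ => d₁ / d + Real.exp (-d / p₁) * (1 - d₁ / d))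
      (Set.Ici d₁) := by
  have key : ∀ x : ℝ, x ≠ 0 → HasDerivAt
      (fun d : ℝ => d₁ / d + Real.exp (-d / p₁) * (1 - d₁ / d))
      (d₁ * -(x ^ 2)⁻¹ + (Real.exp (-x / p₁) * (-1 / p₁) * (1 - d₁ / x)
        + Real.exp (-x / p₁) * -(d₁ * -(x ^ 2)⁻¹))) x := by
    intro x hx
    have h1 : HasDerivAt (fun d : ℝ => d₁ / d) (d₁ * -(x ^ 2)⁻¹) x := by
      simpa [div_eq_mul_inv] using (hasDerivAt_inv hx).const_mul d₁
    have h2 : HasDerivAt (fun d : ℝ => Real.exp (-d / p₁))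
        (Real.exp (-x / p₁) * (-1 / p₁)) x := by
      have : HasDerivAt (fun d : ℝ => -d / p₁) (-1 / p₁) x :=
        ((hasDerivAt_id x).neg).div_const p₁
      exact this.exp
    have h3 : HasDerivAt (fun d : ℝ => 1 - d₁ / d) (-(d₁ * -(x ^ 2)⁻¹)) x := by
      exact h1.const_sub 1
    exact h1.add (h2.mul h3)
  apply strictAntiOn_of_deriv_neg (convex_Ici d₁)
  · apply ContinuousOn.add
    · exact continuousOn_const.div continuousOn_id fun x hx => ne_of_gt (lt_of_lt_of_le hd₁ hx)
    · apply ContinuousOn.mul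
      · exact (Real.continuous_exp.comp (continuous_neg.div_const p₁)).continuousOn
      · exact continuousOn_const.sub
          (continuousOn_const.div continuousOn_id fun x hx => ne_of_gt (lt_of_lt_of_le hd₁ hx))
  · intro x hx
    rw [interior_Ici] at hx
    have hxd : d₁ < x := hx
    have hx0 : 0 < x := lt_trans hd₁ hxd
    rw [(key x hx0.ne').deriv]
    have he1 : Real.exp (-x / p₁) < 1 := by
      rw [Real.exp_lt_one_iff]
      exact div_neg_of_neg_of_pos (neg_neg_iff_pos.mpr hx0) hp₁
    have he0 : 0 < Real.exp (-x / p₁) := Real.exp_pos _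
    have hxr : d₁ / x < 1 := (div_lt_one hx0).mpr hxd
    have h2 : (0:ℝ) < (x ^ 2)⁻¹ := by positivity
    have hterm1 : d₁ * -(x ^ 2)⁻¹ + Real.exp (-x / p₁) * -(d₁ * -(x ^ 2)⁻¹) < 0 := by
      nlinarith [mul_pos hd₁ h2]
    have hterm2 : Real.exp (-x / p₁) * (-1 / p₁) * (1 - d₁ / x) < 0 := by
      have : (0:ℝ) < 1 - d₁ / x := by linarith
      have hneg : Real.exp (-x / p₁) * (-1 / p₁) < 0 := by
        apply mul_neg_of_pos_of_neg he0
        exact div_neg_of_neg_of_pos (by norm_num) hp₁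
      exact mul_neg_of_neg_of_pos hneg this
    linarith
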